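/- Let ε ∈ (0,1), δ > 0, and let n be a positive integer. Let X and Y be disjoint nonempty finite sets of positive reals with |X| + |Y| ≤ n. For x > 0 define the rounding r(x) := δ·⌈x/δ⌉. Suppose that Σ_{x∈X} r(x) = Σ_{y∈Y} r(y) and that δ ≤ (ε/(2n)) · max{r(z) : z ∈ X ∪ Y}. Then R(X,Y) ≤ 1 + ε. -/

import Mathlib

/-- The ratio `R(X,Y) = max{Σ(X)/Σ(Y), Σ(Y)/Σ(X)}` of two finite sets of reals. -/
noncomputable def ratio (X Y : Finset ℝ) : ℝ :=
  max (X.sum id / Y.sum id) (Y.sum id / X.sum id)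

lemma div_le_one_add (ε A B S : ℝ) (hε : 0 < ε) (hε1 : ε < 1) (hS : 0 < S)
    (h1 : A ≤ S) (h2 : S * (1 - ε / 2) ≤ B) (hB : 0 < B) : A / B ≤ 1 + ε := by
  rw [div_le_iff₀ hB]
  have key : S ≤ (1 + ε) * (S * (1 - ε / 2)) := by nlinarith [mul_nonneg (mul_nonneg hS.le hε.le) (by linarith : (0:ℝ) ≤ 1 - ε)]
  nlinarith [mul_le_mul_of_nonneg_left h2 (by linarith : (0:ℝ) ≤ 1 + ε)]

/-- **Rounding I (Lemma 4.10).** If two disjoint nonempty finite sets `X, Y` of positive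
reals, with `|X| + |Y| ≤ n`, have equal sums after rounding each element up to a multiple
of `δ`, and `δ ≤ (ε/(2n)) · max{r(z) : z ∈ X ∪ Y}`, then `R(X,Y) ≤ 1 + ε`. -/
theorem rounding_one (ε δ : ℝ) (hε : ε ∈ Set.Ioo (0 : ℝ) 1) (hδ : 0 < δ)
    (n : ℕ) (hn : 0 < n)
    (X Y : Finset ℝ) (hd : Disjoint X Y) (hX : X.Nonempty) (hY : Y.Nonempty)
    (hpos : ∀ x ∈ X ∪ Y, 0 < x) (hcard : X.card + Y.card ≤ n)
    (hsum : ∑ x ∈ X, δ * (⌈x / δ⌉ : ℝ) = ∑ y ∈ Y, δ * (⌈y / δ⌉ : ℝ))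
    (hδ2 : δ ≤ ε / (2 * n) *
      ((X ∪ Y).sup' (hX.inl) (fun z => δ * (⌈z / δ⌉ : ℝ)))) :
    ratio X Y ≤ 1 + ε := by
  obtain ⟨hε0, hε1⟩ := hε
  set r : ℝ → ℝ := fun z => δ * (⌈z / δ⌉ : ℝ) with hr
  have hr1 : ∀ z : ℝ, z ≤ r z := by
    intro z
    calc z = δ * (z / δ) := by field_simp
      _ ≤ δ * (⌈z / δ⌉ : ℝ) := by gcongr; exact Int.le_ceil _
  have hr2 : ∀ z : ℝ, r z < z + δ := by
    intro z
    show δ * (⌈z / δ⌉ : ℝ) < z + δ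
    have h := Int.ceil_lt_add_one (z / δ)
    have h2 : δ * (⌈z / δ⌉ : ℝ) < δ * (z / δ + 1) := by gcongr
    have h3 : δ * (z / δ + 1) = z + δ := by field_simp
    linarith
  set S : ℝ := ∑ x ∈ X, r x with hS
  have hSY : ∑ y ∈ Y, r y = S := hsum.symm
  have hSXle : X.sum id ≤ S := Finset.sum_le_sum (fun x _ => hr1 x)
  have hSYle : Y.sum id ≤ S := by rw [← hSY]; exact Finset.sum_le_sum (fun y _ => hr1 y)
  have hSXgt : S - X.card * δ < X.sum id := by
    have : S < ∑ x ∈ X, (x + δ) := Finset.sum_lt_sum_of_nonempty hX (fun x _ => hr2 x)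
    rw [Finset.sum_add_distrib, Finset.sum_const, nsmul_eq_mul] at this
    simp only [Finset.sum_apply, id] at this ⊢
    linarith
  have hSYgt : S - Y.card * δ < Y.sum id := by
    have : S < ∑ y ∈ Y, (y + δ) := by
      rw [← hSY]; exact Finset.sum_lt_sum_of_nonempty hY (fun y _ => hr2 y)
    rw [Finset.sum_add_distrib, Finset.sum_const, nsmul_eq_mul] at this
    simp only [Finset.sum_apply, id] at this ⊢
    linarith
  obtain ⟨z, hz, hzM⟩ := Finset.exists_mem_eq_sup' (hX.inl) (fun z => δ * (⌈z / δ⌉ : ℝ))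
  have hrzdef : r z = δ * (⌈z / δ⌉ : ℝ) := rfl
  rw [hzM, ← hrzdef] at hδ2
  have hz0 : 0 < z := hpos z hz
  have hrz0 : 0 < r z := lt_of_lt_of_le hz0 (hr1 z)
  have hMS : r z ≤ S := by
    rcases Finset.mem_union.mp hz with h | h
    · exact Finset.single_le_sum (fun x hx => le_of_lt (lt_of_lt_of_le
        (hpos x (Finset.mem_union_left _ hx)) (hr1 x))) h
    · rw [← hSY]
      exact Finset.single_le_sum (fun y hy => le_of_lt (lt_of_lt_of_le
        (hpos y (Finset.mem_union_right _ hy)) (hr1 y))) h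
  have hS0 : 0 < S := lt_of_lt_of_le hrz0 hMS
  have hn0 : (0 : ℝ) < n := Nat.cast_pos.mpr hn
  have hδS : δ ≤ ε / (2 * n) * S := by
    have h1 : ε / (2 * ↑n) * r z ≤ ε / (2 * ↑n) * S :=
      mul_le_mul_of_nonneg_left hMS (by positivity)
    linarith
  have hnδ : (n : ℝ) * δ ≤ ε / 2 * S := by
    have : (n : ℝ) * δ ≤ (n : ℝ) * (ε / (2 * n) * S) := by gcongr
    calc (n : ℝ) * δ ≤ (n : ℝ) * (ε / (2 * n) * S) := this
      _ = ε / 2 * S := by field_simp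
  have hcX : (X.card : ℝ) ≤ n := by
    have : X.card ≤ n := le_trans (Nat.le_add_right _ _) hcard
    exact_mod_cast this
  have hcY : (Y.card : ℝ) ≤ n := by
    have : Y.card ≤ n := le_trans (Nat.le_add_left _ _) hcard
    exact_mod_cast this
  have hXlow : S * (1 - ε / 2) ≤ X.sum id := by
    have : (X.card : ℝ) * δ ≤ (n : ℝ) * δ := by gcongr
    nlinarith
  have hYlow : S * (1 - ε / 2) ≤ Y.sum id := by
    have : (Y.card : ℝ) * δ ≤ (n : ℝ) * δ := by gcongr
    nlinarith
  have hX0 : 0 < X.sum id := lt_of_lt_of_le (by nlinarith) hXlow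
  have hY0 : 0 < Y.sum id := lt_of_lt_of_le (by nlinarith) hYlow
  unfold ratio
  apply max_le
  · exact div_le_one_add ε _ _ S hε0 hε1 hS0 hSXle hYlow hY0
  · exact div_le_one_add ε _ _ S hε0 hε1 hS0 hSYle hXlow hX0
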